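/- For all real numbers b ≥ b' ≥ π, the integral C₀⁺(b,b') = ∫₀^∞ t(1 + e^{-t}) / ((t² + b²)(t² + b'²)) dt satisfies C₀⁺(b,b') ≤ (log b - log b')/(b² - b'²) + 1/(b² b'²), where for b = b' the first term on the right is interpreted as its limit 1/(2b²). -/

import Mathlib

open Real MeasureTheory Set Filter

-- ∫₀^∞ t e^{-t} dt = 1, with integrability
lemma texp_deriv : ∀ x ∈ Ici (0:ℝ),
    HasDerivAt (fun t : ℝ => -((t+1) * Real.exp (-t))) (x * Real.exp (-x)) x := by
  intro x _
  have h1 : HasDerivAt (fun t : ℝ => Real.exp (-t)) (-Real.exp (-x)) x := by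
    simpa using (hasDerivAt_neg x).exp
  have h2 : HasDerivAt (fun t : ℝ => (t+1) * Real.exp (-t))
      (1 * Real.exp (-x) + (x+1) * -Real.exp (-x)) x :=
    (((hasDerivAt_id x).add_const 1)).mul h1
  exact h2.neg.congr_deriv (by ring)

lemma texp_tendsto :
    Tendsto (fun t : ℝ => -((t+1) * Real.exp (-t))) atTop (nhds 0) := by
  have h1 : Tendsto (fun t : ℝ => t * Real.exp (-t)) atTop (nhds 0) := by
    simpa using Real.tendsto_pow_mul_exp_neg_atTop_nhds_zero 1
  have h2 : Tendsto (fun t : ℝ => Real.exp (-t)) atTop (nhds 0) :=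
    Real.tendsto_exp_neg_atTop_nhds_zero
  have := (h1.add h2).neg
  simp only [neg_zero, add_zero] at this
  convert this using 2 with t
  ring

lemma texp_nonneg : ∀ x ∈ Ioi (0:ℝ), 0 ≤ x * Real.exp (-x) := fun x hx =>
  mul_nonneg (le_of_lt hx) (Real.exp_pos _).le

lemma texp_integrable : IntegrableOn (fun t : ℝ => t * Real.exp (-t)) (Ioi 0) :=
  integrableOn_Ioi_deriv_of_nonneg' texp_deriv texp_nonneg texp_tendsto

lemma texp_integral : ∫ t in Ioi (0:ℝ), t * Real.exp (-t) = 1 := by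
  have := integral_Ioi_of_hasDerivAt_of_nonneg' texp_deriv texp_nonneg texp_tendsto
  simpa using this

theorem stmt_2 (b b' : ℝ) (hbb : b' ≤ b) (hb' : π ≤ b') :
    ∫ t in Ioi (0 : ℝ), t * (1 + Real.exp (-t)) / ((t ^ 2 + b ^ 2) * (t ^ 2 + b' ^ 2)) ≤
      (if b = b' then 1 / (2 * b ^ 2)
        else (Real.log b - Real.log b') / (b ^ 2 - b' ^ 2)) + 1 / (b ^ 2 * b' ^ 2) := by
  have hb'0 : (0:ℝ) < b' := lt_of_lt_of_le Real.pi_pos hb'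
  have hb0 : (0:ℝ) < b := lt_of_lt_of_le hb'0 hbb
  have hD : ∀ t : ℝ, 0 < (t ^ 2 + b ^ 2) * (t ^ 2 + b' ^ 2) := by
    intro t
    positivity
  -- first part
  have hf1 : IntegrableOn (fun t : ℝ => t / ((t ^ 2 + b ^ 2) * (t ^ 2 + b' ^ 2))) (Ioi 0) ∧
      ∫ t in Ioi (0:ℝ), t / ((t ^ 2 + b ^ 2) * (t ^ 2 + b' ^ 2)) =
        (if b = b' then 1 / (2 * b ^ 2)
          else (Real.log b - Real.log b') / (b ^ 2 - b' ^ 2)) := by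
    have hden : ∀ (c : ℝ), 0 < c → ∀ x : ℝ, (0:ℝ) < x ^ 2 + c ^ 2 := fun c hc x => by positivity
    rcases eq_or_lt_of_le hbb with heq | hlt
    · subst heq
      simp only [if_pos rfl]
      have hderiv : ∀ x ∈ Ici (0:ℝ), HasDerivAt (fun t : ℝ => -(1 / (2 * (t ^ 2 + b' ^ 2))))
          (x / ((x ^ 2 + b' ^ 2) * (x ^ 2 + b' ^ 2))) x := by
        intro x _
        have h : HasDerivAt (fun t : ℝ => 2 * (t ^ 2 + b' ^ 2)) (2 * (2 * x)) x := by
          have := ((hasDerivAt_pow 2 x).add_const (b' ^ 2)).const_mul 2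
          simpa using this
        have h2 := (h.inv (by positivity)).neg
        have h3 := h2.congr_deriv (show _ = x / ((x ^ 2 + b' ^ 2) * (x ^ 2 + b' ^ 2)) by
          have := hden b' hb'0 x
          field_simp)
        refine h3.congr_of_eventuallyEq (Filter.Eventually.of_forall fun t => ?_)
        show -(1 / (2 * (t ^ 2 + b' ^ 2))) = -(2 * (t ^ 2 + b' ^ 2))⁻¹
        rw [one_div]
      have htend : Tendsto (fun t : ℝ => -(1 / (2 * (t ^ 2 + b' ^ 2)))) atTop (nhds 0) := by
        have h1 : Tendsto (fun t : ℝ => 2 * (t ^ 2 + b' ^ 2)) atTop atTop :=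
          (tendsto_atTop_add_const_right _ (b' ^ 2) (tendsto_pow_atTop two_ne_zero)).const_mul_atTop
            (by norm_num)
        simpa using (h1.inv_tendsto_atTop).neg
      have hnn : ∀ x ∈ Ioi (0:ℝ), 0 ≤ x / ((x ^ 2 + b' ^ 2) * (x ^ 2 + b' ^ 2)) := fun x hx =>
        div_nonneg (le_of_lt hx) (hD x).le
      refine ⟨integrableOn_Ioi_deriv_of_nonneg' hderiv hnn htend, ?_⟩
      rw [integral_Ioi_of_hasDerivAt_of_nonneg' hderiv hnn htend]
      norm_num
    · simp only [if_neg (ne_of_gt hlt)]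
      set c : ℝ := 1 / (2 * (b ^ 2 - b' ^ 2)) with hc
      have hbb2 : b' ^ 2 < b ^ 2 := by nlinarith
      have hderiv : ∀ x ∈ Ici (0:ℝ), HasDerivAt
          (fun t : ℝ => c * (Real.log (t ^ 2 + b' ^ 2) - Real.log (t ^ 2 + b ^ 2)))
          (x / ((x ^ 2 + b ^ 2) * (x ^ 2 + b' ^ 2))) x := by
        intro x _
        have hl1 : HasDerivAt (fun t : ℝ => Real.log (t ^ 2 + b' ^ 2))
            ((2 * x) / (x ^ 2 + b' ^ 2)) x := by
          have h := ((hasDerivAt_pow 2 x).add_const (b' ^ 2)).log (ne_of_gt (hden b' hb'0 x))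
          simpa using h
        have hl2 : HasDerivAt (fun t : ℝ => Real.log (t ^ 2 + b ^ 2))
            ((2 * x) / (x ^ 2 + b ^ 2)) x := by
          have h := ((hasDerivAt_pow 2 x).add_const (b ^ 2)).log (ne_of_gt (hden b hb0 x))
          simpa using h
        have h := (hl1.sub hl2).const_mul c
        have h1 := hden b hb0 x
        have h2 := hden b' hb'0 x
        have hne : b ^ 2 - b' ^ 2 ≠ 0 := by nlinarith
        exact h.congr_deriv (by
          rw [hc]
          field_simp
          ring)
      have htend : Tendsto
          (fun t : ℝ => c * (Real.log (t ^ 2 + b' ^ 2) - Real.log (t ^ 2 + b ^ 2)))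
          atTop (nhds 0) := by
        have heq2 : (fun t : ℝ => Real.log (t ^ 2 + b' ^ 2) - Real.log (t ^ 2 + b ^ 2)) =
            fun t : ℝ => Real.log (1 + (b' ^ 2 - b ^ 2) / (t ^ 2 + b ^ 2)) := by
          funext t
          rw [← Real.log_div (ne_of_gt (hden b' hb'0 t)) (ne_of_gt (hden b hb0 t))]
          congr 1
          field_simp
          ring
        have h1 : Tendsto (fun t : ℝ => (b' ^ 2 - b ^ 2) / (t ^ 2 + b ^ 2)) atTop (nhds 0) :=
          Tendsto.div_atTop tendsto_const_nhds
            (tendsto_atTop_add_const_right _ (b ^ 2) (tendsto_pow_atTop two_ne_zero))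
        have h2 : Tendsto (fun t : ℝ => 1 + (b' ^ 2 - b ^ 2) / (t ^ 2 + b ^ 2)) atTop (nhds 1) := by
          simpa using (tendsto_const_nhds.add h1)
        have h3 := ((Real.continuousAt_log one_ne_zero).tendsto.comp h2)
        rw [Real.log_one] at h3
        have h4 : Tendsto (fun t : ℝ => Real.log (t ^ 2 + b' ^ 2) - Real.log (t ^ 2 + b ^ 2))
            atTop (nhds 0) := by
          rw [heq2]
          exact h3
        simpa using h4.const_mul c
      have hnn : ∀ x ∈ Ioi (0:ℝ), 0 ≤ x / ((x ^ 2 + b ^ 2) * (x ^ 2 + b' ^ 2)) := fun x hx =>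
        div_nonneg (le_of_lt hx) (hD x).le
      refine ⟨integrableOn_Ioi_deriv_of_nonneg' hderiv hnn htend, ?_⟩
      rw [integral_Ioi_of_hasDerivAt_of_nonneg' hderiv hnn htend]
      have e1 : Real.log ((0:ℝ) ^ 2 + b' ^ 2) = 2 * Real.log b' := by
        norm_num [Real.log_pow]
      have e2 : Real.log ((0:ℝ) ^ 2 + b ^ 2) = 2 * Real.log b := by
        norm_num [Real.log_pow]
      rw [e1, e2, hc]
      have : b ^ 2 - b' ^ 2 ≠ 0 := by nlinarith
      field_simp
      ring

  -- second part
  have key : ∀ x ∈ Ioi (0:ℝ), x * Real.exp (-x) / ((x ^ 2 + b ^ 2) * (x ^ 2 + b' ^ 2)) ≤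
      1 / (b ^ 2 * b' ^ 2) * (x * Real.exp (-x)) := by
    intro x hx
    have h : b ^ 2 * b' ^ 2 ≤ (x ^ 2 + b ^ 2) * (x ^ 2 + b' ^ 2) := by nlinarith [sq_nonneg x]
    calc x * Real.exp (-x) / ((x ^ 2 + b ^ 2) * (x ^ 2 + b' ^ 2))
        ≤ x * Real.exp (-x) / (b ^ 2 * b' ^ 2) :=
          div_le_div_of_nonneg_left (texp_nonneg x hx) (by positivity) h
      _ = 1 / (b ^ 2 * b' ^ 2) * (x * Real.exp (-x)) := by ring
  have hf2 : IntegrableOn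
      (fun t : ℝ => t * Real.exp (-t) / ((t ^ 2 + b ^ 2) * (t ^ 2 + b' ^ 2))) (Ioi 0) := by
    apply Integrable.mono (texp_integrable.const_mul (1 / (b ^ 2 * b' ^ 2)))
    · apply Measurable.aestronglyMeasurable
      fun_prop
    · filter_upwards [ae_restrict_mem measurableSet_Ioi] with x hx
      simp only [Real.norm_eq_abs]
      rw [abs_of_nonneg (div_nonneg (texp_nonneg x hx) (hD x).le),
        abs_of_nonneg (mul_nonneg (by positivity) (texp_nonneg x hx))]
      exact key x hx
  have hf2bound : ∫ t in Ioi (0:ℝ), t * Real.exp (-t) / ((t ^ 2 + b ^ 2) * (t ^ 2 + b' ^ 2)) ≤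
      1 / (b ^ 2 * b' ^ 2) := by
    have : ∫ t in Ioi (0:ℝ), t * Real.exp (-t) / ((t ^ 2 + b ^ 2) * (t ^ 2 + b' ^ 2)) ≤
        ∫ t in Ioi (0:ℝ), (1 / (b ^ 2 * b' ^ 2)) * (t * Real.exp (-t)) :=
      setIntegral_mono_on hf2 (texp_integrable.const_mul _) measurableSet_Ioi key
    rw [integral_const_mul, texp_integral] at this
    simpa using this
  -- split
  have hsplit : (fun t : ℝ => t * (1 + Real.exp (-t)) / ((t ^ 2 + b ^ 2) * (t ^ 2 + b' ^ 2))) =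
      fun t : ℝ => t / ((t ^ 2 + b ^ 2) * (t ^ 2 + b' ^ 2)) +
        t * Real.exp (-t) / ((t ^ 2 + b ^ 2) * (t ^ 2 + b' ^ 2)) := by
    funext t; rw [mul_add, mul_one, add_div]
  rw [hsplit, integral_add hf1.1 hf2, hf1.2]
  exact add_le_add_right hf2bound _
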